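/- Under the higher order adaptive control tuner, if φ ∈ L^∞, then lim_{t→∞} e(t) = 0. -/

import Mathlib

open Matrix Filter
local notation "⟪" x ", " y "⟫" => @inner ℝ _ _ x y


lemma barbalat {f f' : ℝ → ℝ} {K C : ℝ}
    (hd : ∀ t, HasDerivAt f (f' t) t)
    (hK : ∀ t, 0 ≤ t → |f' t| ≤ K)
    (hf0 : ∀ t, 0 ≤ f t)
    (hint : ∀ T, 0 ≤ T → (∫ t in (0:ℝ)..T, f t) ≤ C) :
    Tendsto f atTop (nhds 0) := by
  have hcont : Continuous f := by
    refine continuous_iff_continuousAt.2 fun t => (hd t).continuousAt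
  have hinteg : ∀ a b : ℝ, IntervalIntegrable f MeasureTheory.volume a b :=
    fun a b => (hcont.intervalIntegrable a b)
  set F : ℝ → ℝ := fun T => ∫ t in (0:ℝ)..T, f t with hF
  have hFmono : Monotone F := by
    intro a b hab
    have : F b - F a = ∫ t in a..b, f t := by
      rw [hF]
      simp only
      rw [← intervalIntegral.integral_add_adjacent_intervals (hinteg 0 a) (hinteg a b)]
      ring
    have hpos : 0 ≤ ∫ t in a..b, f t :=
      intervalIntegral.integral_nonneg hab (fun x _ => hf0 x)
    linarith
  have hFbdd : BddAbove (Set.range F) := by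
    refine ⟨max C 0, ?_⟩
    rintro _ ⟨T, rfl⟩
    rcases le_or_gt 0 T with h | h
    · exact le_max_of_le_left (hint T h)
    · have : F T ≤ F 0 := hFmono h.le
      have : F 0 = 0 := by simp [hF]
      refine le_max_of_le_right ?_
      have := hFmono h.le
      simpa [hF] using this.trans_eq (by simp [hF])
  obtain ⟨L, hL⟩ : ∃ L, Tendsto F atTop (nhds L) :=
    ⟨_, tendsto_atTop_ciSup hFmono hFbdd⟩
  by_contra hnot
  -- extract ε and a sequence
  have hfreq : ∃ ε > 0, ∀ N : ℝ, ∃ t ≥ N, ε ≤ f t := by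
    by_contra hc
    push_neg at hc
    apply hnot
    rw [Metric.tendsto_atTop]
    intro ε hε
    obtain ⟨N, hN⟩ := hc ε hε
    exact ⟨N, fun t ht => by
      rw [Real.dist_eq, sub_zero, abs_of_nonneg (hf0 t)]
      exact hN t ht⟩
  obtain ⟨ε, hε, hseq⟩ := hfreq
  set K' : ℝ := max K 1 with hK'
  have hK'pos : 0 < K' := lt_of_lt_of_le one_pos (le_max_right _ _)
  have hKle : ∀ t, 0 ≤ t → |f' t| ≤ K' := fun t ht => (hK t ht).trans (le_max_left _ _)
  set δ : ℝ := ε / (2 * K') with hδ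
  have hδpos : 0 < δ := div_pos hε (by positivity)
  choose u hu hfu using fun k : ℕ => hseq (max k 0)
  have hu0 : ∀ k, (0:ℝ) ≤ u k := fun k => le_trans (le_max_right _ _) (hu k)
  have huk : ∀ k : ℕ, (k:ℝ) ≤ u k := fun k => le_trans (le_max_left _ _) (hu k)
  have hutop : Tendsto u atTop atTop :=
    tendsto_atTop_mono huk tendsto_natCast_atTop_atTop
  -- lower bound on f on [u k, u k + δ]
  have hlow : ∀ k : ℕ, ∀ t ∈ Set.Icc (u k) (u k + δ), ε / 2 ≤ f t := by
    intro k t ht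
    have hmvt : |f t - f (u k)| ≤ K' * |t - u k| := by
      have := Convex.norm_image_sub_le_of_norm_hasDerivWithin_le
        (f := f) (f' := f') (C := K') (s := Set.Ici (0:ℝ))
        (fun x hx => (hd x).hasDerivWithinAt)
        (fun x hx => by simpa using hKle x hx) (convex_Ici 0)
        (le_trans (hu0 k) ht.1) (hu0 k)
      simpa [Real.norm_eq_abs, abs_sub_comm] using this
    have h1 : |t - u k| ≤ δ := by
      rw [abs_of_nonneg (by linarith [ht.1])]
      linarith [ht.2]
    have h2 : K' * |t - u k| ≤ K' * δ := by
      exact mul_le_mul_of_nonneg_left h1 hK'pos.le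
    have h3 : K' * δ = ε / 2 := by
      field_simp [hδ]
      have hK'ne : K' ≠ 0 := hK'pos.ne'
      rw [hδ]; field_simp
    have h4 : f (u k) - f t ≤ ε / 2 := by
      calc f (u k) - f t ≤ |f t - f (u k)| := by rw [abs_sub_comm]; exact le_abs_self _
        _ ≤ ε / 2 := by rw [← h3]; exact hmvt.trans h2
    linarith [hfu k]
  -- integral lower bound
  have hintlow : ∀ k : ℕ, δ * (ε / 2) ≤ F (u k + δ) - F (u k) := by
    intro k
    have hFd : F (u k + δ) - F (u k) = ∫ t in (u k)..(u k + δ), f t := by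
      rw [hF]; simp only
      rw [← intervalIntegral.integral_add_adjacent_intervals (hinteg 0 (u k)) (hinteg (u k) (u k + δ))]
      ring
    rw [hFd]
    have h5 : ∫ t in (u k)..(u k + δ), (ε/2 : ℝ) ≤ ∫ t in (u k)..(u k + δ), f t := by
      apply intervalIntegral.integral_mono_on (by linarith) (by simp) (hinteg _ _)
      exact fun x hx => hlow k x hx
    rw [intervalIntegral.integral_const, smul_eq_mul] at h5
    nlinarith [h5]
  -- contradiction
  have hsub : Tendsto (fun k : ℕ => F (u k + δ) - F (u k)) atTop (nhds (L - L)) :=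
    (hL.comp (hutop.atTop_add tendsto_const_nhds)).sub (hL.comp hutop)
  rw [sub_self] at hsub
  have : δ * (ε / 2) ≤ 0 :=
    ge_of_tendsto hsub (Eventually.of_forall hintlow)
  nlinarith


lemma posdef_inner_pos {n : ℕ} {P : Matrix (Fin n) (Fin n) ℝ} (hP : P.PosDef)
    {x : EuclideanSpace ℝ (Fin n)} (hx : x ≠ 0) :
    0 < ⟪x, Matrix.toEuclideanLin P x⟫ := by
  have := hP.dotProduct_mulVec_pos (x := WithLp.ofLp x) (by simpa using hx)
  simpa [EuclideanSpace.inner_eq_star_dotProduct, Matrix.toEuclideanLin_apply, dotProduct_comm] using this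

lemma posdef_inner_nonneg {n : ℕ} {P : Matrix (Fin n) (Fin n) ℝ} (hP : P.PosDef)
    (x : EuclideanSpace ℝ (Fin n)) :
    0 ≤ ⟪x, Matrix.toEuclideanLin P x⟫ := by
  have := hP.posSemidef.dotProduct_mulVec_nonneg (WithLp.ofLp x)
  simpa [EuclideanSpace.inner_eq_star_dotProduct, Matrix.toEuclideanLin_apply, dotProduct_comm] using this

lemma posdef_lower_bound {n : ℕ} {P : Matrix (Fin n) (Fin n) ℝ} (hP : P.PosDef) (hn : 0 < n) :
    ∃ c > 0, ∀ x : EuclideanSpace ℝ (Fin n), c * ‖x‖ ^ 2 ≤ ⟪x, Matrix.toEuclideanLin P x⟫ := by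
  set Pl := Matrix.toEuclideanLin P with hPl
  have hcont : Continuous fun x : EuclideanSpace ℝ (Fin n) => ⟪x, Pl x⟫ := by
    exact continuous_id.inner ((LinearMap.continuous_of_finiteDimensional Pl).comp continuous_id)
  have hsph : IsCompact (Metric.sphere (0 : EuclideanSpace ℝ (Fin n)) 1) :=
    isCompact_sphere _ _
  have : Nontrivial (EuclideanSpace ℝ (Fin n)) :=
    Module.nontrivial_of_finrank_pos (R := ℝ) (by simpa using hn)
  have hne : (Metric.sphere (0 : EuclideanSpace ℝ (Fin n)) 1).Nonempty :=
    NormedSpace.sphere_nonempty.2 (by norm_num)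
  obtain ⟨x0, hx0, hmin⟩ := hsph.exists_isMinOn hne hcont.continuousOn
  have hx0norm : ‖x0‖ = 1 := by simpa using hx0
  have hx0ne : x0 ≠ 0 := by intro h; rw [h] at hx0norm; simp at hx0norm
  refine ⟨⟪x0, Pl x0⟫, posdef_inner_pos hP hx0ne, fun x => ?_⟩
  rcases eq_or_ne x 0 with rfl | hx
  · simp
  · have hnx : (0:ℝ) < ‖x‖ := norm_pos_iff.2 hx
    have hu : (‖x‖⁻¹ • x) ∈ Metric.sphere (0 : EuclideanSpace ℝ (Fin n)) 1 := by
      simp [norm_smul, abs_of_pos hnx, inv_mul_cancel₀ hnx.ne']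
    have hle : ⟪x0, Pl x0⟫ ≤ ‖x‖⁻¹ * ‖x‖⁻¹ * ⟪x, Pl x⟫ := by
      have hexp : ⟪‖x‖⁻¹ • x, Pl (‖x‖⁻¹ • x)⟫ = ‖x‖⁻¹ * ‖x‖⁻¹ * ⟪x, Pl x⟫ := by
        rw [Pl.map_smul, inner_smul_left, inner_smul_right]
        simp [mul_assoc]
      simpa only [Set.mem_setOf_eq, hexp] using hmin hu
    have heq : ‖x‖⁻¹ * ‖x‖⁻¹ * ⟪x, Pl x⟫ * ‖x‖ ^ 2 = ⟪x, Pl x⟫ := by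
      field_simp [pow_two]
    nlinarith [sq_nonneg ‖x‖]

section main
variable {n d : ℕ} (β γ : ℝ) (A P : Matrix (Fin n) (Fin n) ℝ)

-- transpose acts as adjoint
lemma inner_toEuclideanLin_transpose (A : Matrix (Fin n) (Fin n) ℝ)
    (x y : EuclideanSpace ℝ (Fin n)) :
    ⟪x, Matrix.toEuclideanLin Aᵀ y⟫ = ⟪Matrix.toEuclideanLin A x, y⟫ := by
  have h : Aᵀ = Aᴴ := (Matrix.conjTranspose_eq_transpose_of_trivial A).symm
  rw [h, Matrix.toEuclideanLin_conjTranspose_eq_adjoint, real_inner_comm,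
    LinearMap.adjoint_inner_left, real_inner_comm]

lemma toEuclideanLin_mul_apply (M N : Matrix (Fin n) (Fin n) ℝ) (x : EuclideanSpace ℝ (Fin n)) :
    Matrix.toEuclideanLin (M * N) x = Matrix.toEuclideanLin M (Matrix.toEuclideanLin N x) := by
  simp [Matrix.toEuclideanLin_apply, Matrix.mulVec_mulVec]

lemma lyap_identity (hLyap : Aᵀ * P + P * A = -((2 : ℝ) • (1 : Matrix (Fin n) (Fin n) ℝ)))
    (x : EuclideanSpace ℝ (Fin n)) :
    ⟪Matrix.toEuclideanLin A x, Matrix.toEuclideanLin P x⟫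
      + ⟪x, Matrix.toEuclideanLin P (Matrix.toEuclideanLin A x)⟫ = -2 * ‖x‖ ^ 2 := by
  have h := congrArg (fun M => ⟪x, Matrix.toEuclideanLin M x⟫) hLyap
  have h1 : Matrix.toEuclideanLin (-((2 : ℝ) • (1 : Matrix (Fin n) (Fin n) ℝ))) x
      = (-2 : ℝ) • x := by
    ext i
    simp [Matrix.toEuclideanLin_apply, Matrix.neg_mulVec, Matrix.smul_mulVec]
  simp only [map_add, LinearMap.add_apply, inner_add_right, h1, inner_smul_right,
    real_inner_self_eq_norm_sq] at h
  rw [toEuclideanLin_mul_apply, toEuclideanLin_mul_apply] at h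
  rw [← inner_toEuclideanLin_transpose A x (Matrix.toEuclideanLin P x)]
  linarith [h]

-- self-adjointness of P
lemma posdef_symm (hP : P.IsHermitian) (x y : EuclideanSpace ℝ (Fin n)) :
    ⟪Matrix.toEuclideanLin P x, y⟫ = ⟪x, Matrix.toEuclideanLin P y⟫ := by
  conv_lhs => rw [← hP.eq]
  rw [Matrix.toEuclideanLin_conjTranspose_eq_adjoint, LinearMap.adjoint_inner_left]

end main

set_option maxHeartbeats 2000000 in
/-- Higher order tuner for adaptive control: if `φ ∈ L^∞`, then `e(t) → 0`. -/
theorem stmt_15 {n d : ℕ} (β γ : ℝ) (hβ : 0 < β) (hγ : 0 < γ)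
    (A P : Matrix (Fin n) (Fin n) ℝ) (hP : P.PosDef)
    (hLyap : Aᵀ * P + P * A = -((2 : ℝ) • (1 : Matrix (Fin n) (Fin n) ℝ)))
    (b : EuclideanSpace ℝ (Fin n))
    (φ : ℝ → EuclideanSpace ℝ (Fin d)) (hφ : Continuous φ)
    (hφ_bdd : ∃ M : ℝ, ∀ t : ℝ, ‖φ t‖ ≤ M)
    (θstar : EuclideanSpace ℝ (Fin d))
    (e : ℝ → EuclideanSpace ℝ (Fin n)) (θ ϑ : ℝ → EuclideanSpace ℝ (Fin d))
    (Nt : ℝ → ℝ)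
    (hNt : Nt = fun t => 1 + (2 * γ * ‖Matrix.toEuclideanLin P b‖ ^ 2 / β) * ‖φ t‖ ^ 2)
    (he : ∀ t : ℝ, HasDerivAt e
      (Matrix.toEuclideanLin A (e t) + ⟪θ t - θstar, φ t⟫ • b) t)
    (hϑ : ∀ t : ℝ, HasDerivAt ϑ ((-γ * ⟪e t, Matrix.toEuclideanLin P b⟫) • φ t) t)
    (hθ : ∀ t : ℝ, HasDerivAt θ ((-(β * Nt t)) • (θ t - ϑ t)) t) :
    Tendsto e atTop (nhds (0 : EuclideanSpace ℝ (Fin n))) := by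
  rcases Nat.eq_zero_or_pos n with hn | hn
  · subst hn
    have h0 : ∀ t, e t = 0 := fun t => Subsingleton.elim _ _
    have : e = fun _ => (0 : EuclideanSpace ℝ (Fin 0)) := funext h0
    rw [this]
    exact tendsto_const_nhds
  obtain ⟨M, hM⟩ := hφ_bdd
  have hM0 : 0 ≤ M := le_trans (norm_nonneg _) (hM 0)
  obtain ⟨c, hc, hcl⟩ := posdef_lower_bound hP hn
  set Pl := Matrix.toEuclideanLin P with hPldef
  set Al := Matrix.toEuclideanLin A with hAldef
  set Plc : EuclideanSpace ℝ (Fin n) →L[ℝ] EuclideanSpace ℝ (Fin n) :=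
    LinearMap.toContinuousLinearMap Pl with hPlc
  set Alc : EuclideanSpace ℝ (Fin n) →L[ℝ] EuclideanSpace ℝ (Fin n) :=
    LinearMap.toContinuousLinearMap Al with hAlc
  set E' : ℝ → EuclideanSpace ℝ (Fin n) :=
    fun t => Al (e t) + ⟪θ t - θstar, φ t⟫ • b with hE'
  set Θ' : ℝ → EuclideanSpace ℝ (Fin d) :=
    fun t => (-γ * ⟪e t, Pl b⟫) • φ t with hΘ'
  set D' : ℝ → EuclideanSpace ℝ (Fin d) :=
    fun t => (-(β * Nt t)) • (θ t - ϑ t) - Θ' t with hD'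
  set V : ℝ → ℝ := fun t => ⟪e t, Pl (e t)⟫ + γ⁻¹ * ⟪ϑ t - θstar, ϑ t - θstar⟫
    + γ⁻¹ * ⟪θ t - ϑ t, θ t - ϑ t⟫ with hV
  set W : ℝ → ℝ := fun t =>
    (⟪e t, Pl (E' t)⟫ + ⟪E' t, Pl (e t)⟫)
    + γ⁻¹ * (⟪ϑ t - θstar, Θ' t⟫ + ⟪Θ' t, ϑ t - θstar⟫)
    + γ⁻¹ * (⟪θ t - ϑ t, D' t⟫ + ⟪D' t, θ t - ϑ t⟫) with hW
  -- V has derivative W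
  have hVd : ∀ t, HasDerivAt V (W t) t := by
    intro t
    have hPe : HasDerivAt (fun t => Pl (e t)) (Pl (E' t)) t := by
      have := Plc.hasFDerivAt.comp_hasDerivAt t (he t)
      exact this
    have h1 : HasDerivAt (fun t => ⟪e t, Pl (e t)⟫)
        (⟪e t, Pl (E' t)⟫ + ⟪E' t, Pl (e t)⟫) t := (he t).inner ℝ hPe
    have h2 : HasDerivAt (fun t => ⟪ϑ t - θstar, ϑ t - θstar⟫)
        (⟪ϑ t - θstar, Θ' t⟫ + ⟪Θ' t, ϑ t - θstar⟫) t :=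
      ((hϑ t).sub_const θstar).inner ℝ ((hϑ t).sub_const θstar)
    have h3 : HasDerivAt (fun t => ⟪θ t - ϑ t, θ t - ϑ t⟫)
        (⟪θ t - ϑ t, D' t⟫ + ⟪D' t, θ t - ϑ t⟫) t :=
      ((hθ t).sub (hϑ t)).inner ℝ ((hθ t).sub (hϑ t))
    exact (h1.add (h2.const_mul γ⁻¹)).add (h3.const_mul γ⁻¹)
  -- the key bound W ≤ -‖e‖²
  have hWle : ∀ t, W t ≤ -‖e t‖ ^ 2 := by
    intro t
    have hlyap := lyap_identity A P hLyap (e t)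
    have hbp : ⟪b, Pl (e t)⟫ = ⟪e t, Pl b⟫ := by
      rw [← posdef_symm P hP.1 b (e t), real_inner_comm]
    have hsplit : (θ t - θstar) = (θ t - ϑ t) + (ϑ t - θstar) := by abel
    have key : W t = -2 * ‖e t‖ ^ 2
        + 4 * ⟪e t, Pl b⟫ * ⟪θ t - ϑ t, φ t⟫
        - 2 * γ⁻¹ * β * Nt t * ⟪θ t - ϑ t, θ t - ϑ t⟫ := by
      simp only [hW, hE', hΘ', hD']
      rw [_root_.map_add, _root_.map_smul, hsplit]
      simp only [inner_add_left, inner_add_right, inner_sub_left, inner_sub_right,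
        real_inner_smul_left, real_inner_smul_right, smul_eq_mul]
      have hlyap' : ⟪Al (e t), Pl (e t)⟫ + ⟪e t, Pl (Al (e t))⟫ = -2 * ‖e t‖ ^ 2 := hlyap
      rw [real_inner_comm (φ t) (ϑ t), real_inner_comm (φ t) θstar,
        real_inner_comm (φ t) (θ t), real_inner_comm (ϑ t) (θ t), hbp]
      have hγγ : γ⁻¹ * γ = 1 := inv_mul_cancel₀ hγ.ne'
      linear_combination hlyap' + (2 * ⟪e t, Pl b⟫ * (⟪φ t, θstar⟫ - ⟪φ t, ϑ t⟫)
        + 2 * ⟪e t, Pl b⟫ * (⟪φ t, θ t⟫ - ⟪φ t, ϑ t⟫)) * hγγ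
    rw [key, real_inner_self_eq_norm_sq]
    set p : ℝ := ⟪e t, Pl b⟫ with hp
    set s : ℝ := ⟪θ t - ϑ t, φ t⟫ with hs
    set T : ℝ := ‖θ t - ϑ t‖ with hT
    set Φ : ℝ := ‖φ t‖ with hΦ
    set B : ℝ := ‖Pl b‖ with hB
    have hNt2 : 2 * γ⁻¹ * β * Nt t * T ^ 2
        = 2 * γ⁻¹ * β * T ^ 2 + 4 * B ^ 2 * Φ ^ 2 * T ^ 2 := by
      rw [hNt]
      field_simp
      ring
    have hps : p * s ≤ (‖e t‖ * B) * (T * Φ) := by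
      calc p * s ≤ |p * s| := le_abs_self _
        _ = |p| * |s| := abs_mul _ _
        _ ≤ (‖e t‖ * B) * (T * Φ) := by
            apply mul_le_mul (abs_real_inner_le_norm _ _) (abs_real_inner_le_norm _ _)
              (abs_nonneg _) (by positivity)
    have hnn : 0 ≤ 2 * γ⁻¹ * β * T ^ 2 := by positivity
    nlinarith [hNt2, hps, sq_nonneg (‖e t‖ - 2 * B * Φ * T), hnn,
      norm_nonneg (e t), norm_nonneg (φ t)]
  -- V is nonnegative
  have hV0 : ∀ t, 0 ≤ V t := by
    intro t
    have := posdef_inner_nonneg hP (e t)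
    have h2 := real_inner_self_nonneg (x := ϑ t - θstar)
    have h3 := real_inner_self_nonneg (x := θ t - ϑ t)
    have hγi : 0 ≤ γ⁻¹ := (inv_nonneg).2 hγ.le
    simp only [hV]
    positivity
  -- V is antitone
  have hVanti : Antitone V := by
    apply antitone_of_deriv_nonpos
    · exact fun t => (hVd t).differentiableAt
    · intro t
      rw [(hVd t).deriv]
      have := hWle t
      nlinarith [sq_nonneg ‖e t‖]
  have hVle : ∀ t, 0 ≤ t → V t ≤ V 0 := fun t ht => hVanti ht
  -- bounds for t ≥ 0
  have hebdd : ∀ t, 0 ≤ t → ‖e t‖ ^ 2 ≤ V 0 / c := by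
    intro t ht
    have h1 : c * ‖e t‖ ^ 2 ≤ ⟪e t, Pl (e t)⟫ := hcl (e t)
    have h2 : ⟪e t, Pl (e t)⟫ ≤ V t := by
      have h3 := real_inner_self_nonneg (x := ϑ t - θstar)
      have h4 := real_inner_self_nonneg (x := θ t - ϑ t)
      have hγi : 0 ≤ γ⁻¹ := (inv_nonneg).2 hγ.le
      simp only [hV]
      nlinarith
    rw [le_div_iff₀ hc, mul_comm]
    exact h1.trans (h2.trans (hVle t ht))
  have hθϑbdd : ∀ t, 0 ≤ t → ‖θ t - ϑ t‖ ^ 2 ≤ γ * V 0 := by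
    intro t ht
    have h1 : γ⁻¹ * ⟪θ t - ϑ t, θ t - ϑ t⟫ ≤ V t := by
      have h3 := real_inner_self_nonneg (x := ϑ t - θstar)
      have h4 := posdef_inner_nonneg hP (e t)
      have hγi : 0 ≤ γ⁻¹ := (inv_nonneg).2 hγ.le
      simp only [hV]
      nlinarith
    have h2 := (h1.trans (hVle t ht))
    rw [real_inner_self_eq_norm_sq] at h1 h2
    calc ‖θ t - ϑ t‖ ^ 2 = γ * (γ⁻¹ * ‖θ t - ϑ t‖ ^ 2) := by field_simp
      _ ≤ γ * V 0 := by apply mul_le_mul_of_nonneg_left h2 hγ.le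
  have hϑθbdd : ∀ t, 0 ≤ t → ‖ϑ t - θstar‖ ^ 2 ≤ γ * V 0 := by
    intro t ht
    have h1 : γ⁻¹ * ⟪ϑ t - θstar, ϑ t - θstar⟫ ≤ V t := by
      have h3 := real_inner_self_nonneg (x := θ t - ϑ t)
      have h4 := posdef_inner_nonneg hP (e t)
      have hγi : 0 ≤ γ⁻¹ := (inv_nonneg).2 hγ.le
      simp only [hV]
      nlinarith
    have h2 := (h1.trans (hVle t ht))
    rw [real_inner_self_eq_norm_sq] at h2
    calc ‖ϑ t - θstar‖ ^ 2 = γ * (γ⁻¹ * ‖ϑ t - θstar‖ ^ 2) := by field_simp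
      _ ≤ γ * V 0 := by apply mul_le_mul_of_nonneg_left h2 hγ.le
  -- the squared norm function
  set f : ℝ → ℝ := fun t => ‖e t‖ ^ 2 with hfdef
  set f' : ℝ → ℝ := fun t => ⟪e t, E' t⟫ + ⟪E' t, e t⟫ with hf'def
  have hfd : ∀ t, HasDerivAt f (f' t) t := by
    intro t
    have h1 : HasDerivAt (fun t => ⟪e t, e t⟫) (⟪e t, E' t⟫ + ⟪E' t, e t⟫) t :=
      (he t).inner ℝ (he t)
    have : (fun t => ⟪e t, e t⟫) = f := by
      funext s; rw [hfdef]; exact real_inner_self_eq_norm_sq (e s)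
    rwa [this] at h1
  -- derivative bound
  have hV00 : 0 ≤ V 0 := hV0 0
  set B1 : ℝ := Real.sqrt (V 0 / c) with hB1
  set B2 : ℝ := Real.sqrt (γ * V 0) with hB2
  have hB1nn : 0 ≤ B1 := Real.sqrt_nonneg _
  have hB2nn : 0 ≤ B2 := Real.sqrt_nonneg _
  have heB1 : ∀ t, 0 ≤ t → ‖e t‖ ≤ B1 := by
    intro t ht
    rw [hB1, show ‖e t‖ = Real.sqrt (‖e t‖ ^ 2) by rw [Real.sqrt_sq (norm_nonneg _)]]
    exact Real.sqrt_le_sqrt (hebdd t ht)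
  have hθϑB2 : ∀ t, 0 ≤ t → ‖θ t - ϑ t‖ ≤ B2 := by
    intro t ht
    rw [hB2, show ‖θ t - ϑ t‖ = Real.sqrt (‖θ t - ϑ t‖ ^ 2) by rw [Real.sqrt_sq (norm_nonneg _)]]
    exact Real.sqrt_le_sqrt (hθϑbdd t ht)
  have hϑθB2 : ∀ t, 0 ≤ t → ‖ϑ t - θstar‖ ≤ B2 := by
    intro t ht
    rw [hB2, show ‖ϑ t - θstar‖ = Real.sqrt (‖ϑ t - θstar‖ ^ 2) by rw [Real.sqrt_sq (norm_nonneg _)]]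
    exact Real.sqrt_le_sqrt (hϑθbdd t ht)
  set K : ℝ := 2 * B1 * (‖Alc‖ * B1 + 2 * B2 * M * ‖b‖) with hK
  have hKb : ∀ t, 0 ≤ t → |f' t| ≤ K := by
    intro t ht
    have hE'n : ‖E' t‖ ≤ ‖Alc‖ * B1 + 2 * B2 * M * ‖b‖ := by
      have h1 : ‖E' t‖ ≤ ‖Al (e t)‖ + ‖⟪θ t - θstar, φ t⟫ • b‖ := norm_add_le _ _
      have h2 : ‖Al (e t)‖ ≤ ‖Alc‖ * ‖e t‖ := Alc.le_opNorm (e t)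
      have h3 : ‖⟪θ t - θstar, φ t⟫ • b‖ = |⟪θ t - θstar, φ t⟫| * ‖b‖ := by
        rw [norm_smul, Real.norm_eq_abs]
      have h4 : |⟪θ t - θstar, φ t⟫| ≤ ‖θ t - θstar‖ * ‖φ t‖ := abs_real_inner_le_norm _ _
      have h5 : ‖θ t - θstar‖ ≤ ‖θ t - ϑ t‖ + ‖ϑ t - θstar‖ := by
        have : θ t - θstar = (θ t - ϑ t) + (ϑ t - θstar) := by abel
        rw [this]; exact norm_add_le _ _
      have h6 : ‖θ t - θstar‖ ≤ 2 * B2 := by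
        have := hθϑB2 t ht; have := hϑθB2 t ht; linarith
      have h7 : |⟪θ t - θstar, φ t⟫| ≤ 2 * B2 * M :=
        h4.trans (mul_le_mul h6 (hM t) (norm_nonneg _) (by positivity))
      have h8 : ‖Alc‖ * ‖e t‖ ≤ ‖Alc‖ * B1 :=
        mul_le_mul_of_nonneg_left (heB1 t ht) (norm_nonneg _)
      calc ‖E' t‖ ≤ ‖Al (e t)‖ + |⟪θ t - θstar, φ t⟫| * ‖b‖ := by rw [← h3]; exact h1
        _ ≤ ‖Alc‖ * B1 + 2 * B2 * M * ‖b‖ := by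
            have := mul_le_mul_of_nonneg_right h7 (norm_nonneg b)
            linarith [h2.trans h8]
    have h9 : |f' t| ≤ 2 * ‖e t‖ * ‖E' t‖ := by
      have hx := abs_real_inner_le_norm (e t) (E' t)
      have hy := abs_real_inner_le_norm (E' t) (e t)
      calc |f' t| = |⟪e t, E' t⟫ + ⟪E' t, e t⟫| := rfl
        _ ≤ |⟪e t, E' t⟫| + |⟪E' t, e t⟫| := abs_add_le _ _
        _ ≤ ‖e t‖ * ‖E' t‖ + ‖E' t‖ * ‖e t‖ := add_le_add hx hy
        _ = 2 * ‖e t‖ * ‖E' t‖ := by ring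
    calc |f' t| ≤ 2 * ‖e t‖ * ‖E' t‖ := h9
      _ ≤ K := by
          rw [hK]
          have hE'nn : (0:ℝ) ≤ ‖Alc‖ * B1 + 2 * B2 * M * ‖b‖ :=
            le_trans (norm_nonneg _) hE'n
          have := heB1 t ht
          nlinarith [norm_nonneg (E' t), norm_nonneg (e t), hE'n]
  -- integral bound via G = V + ∫ f
  have hcont_e : Continuous e := by
    refine continuous_iff_continuousAt.2 fun t => (he t).continuousAt
  have hcontf : Continuous f := by
    exact (hcont_e.norm).pow 2
  have hfint : ∀ a b' : ℝ, IntervalIntegrable f MeasureTheory.volume a b' :=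
    fun a b' => hcontf.intervalIntegrable a b'
  have hint : ∀ T, 0 ≤ T → (∫ t in (0:ℝ)..T, f t) ≤ V 0 := by
    intro T hT
    set G : ℝ → ℝ := fun T => V T + ∫ t in (0:ℝ)..T, f t with hG
    have hGd : ∀ t, HasDerivAt G (W t + f t) t := by
      intro t
      refine (hVd t).add ?_
      exact intervalIntegral.integral_hasDerivAt_right (hfint 0 t)
        (hcontf.stronglyMeasurableAtFilter _ _) hcontf.continuousAt
    have hGanti : Antitone G := by
      apply antitone_of_deriv_nonpos
      · exact fun t => (hGd t).differentiableAt
      · intro t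
        rw [(hGd t).deriv]
        have := hWle t
        simp only [hfdef]
        nlinarith
    have h1 : G T ≤ G 0 := hGanti hT
    have h2 : G 0 = V 0 := by simp [hG]
    have h3 : 0 ≤ V T := hV0 T
    have h4 : G T = V T + ∫ t in (0:ℝ)..T, f t := rfl
    rw [h2, h4] at h1
    linarith
  -- Barbalat
  have hf0 : ∀ t, 0 ≤ f t := fun t => sq_nonneg _
  have hbarb := barbalat hfd hKb hf0 hint
  -- conclude
  rw [tendsto_zero_iff_norm_tendsto_zero]
  have hsqrt : Tendsto (fun t => Real.sqrt (f t)) atTop (nhds 0) := by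
    have := (Real.continuous_sqrt.tendsto 0).comp hbarb
    simpa [Function.comp_def] using this
  have : (fun t => Real.sqrt (f t)) = fun t => ‖e t‖ := by
    funext t; rw [hfdef]; exact Real.sqrt_sq (norm_nonneg _)
  rwa [this] at hsqrt
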